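/- Let K be a compact metrizable space, φ: K → K a continuous open surjection, w ∈ C(K), and (Tf)(k) = w(k)·f(φ(k)) on C(K). Suppose there exist fₙ ∈ C(K) with ‖fₙ‖ = 1 and ‖Tfₙ − fₙ‖ → 0, and let kₙ ∈ K satisfy |fₙ(kₙ)| = 1 with kₙ → k. Then for any e ∈ K and m, n ≥ 0 with φ^m(e) = φ^n(k), one has |w_m(e)| ≤ |w_n(k)|, where w₀ ≡ 1 and w_j(x) = w(x)·w(φ(x))···w(φ^{j−1}(x)). -/

import Mathlib

open Filter Topology Function

private lemma isOpenMap_iterate {K : Type*} [TopologicalSpace K] {φ : K → K}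
    (hφo : IsOpenMap φ) (m : ℕ) : IsOpenMap (φ^[m]) := by
  induction m with
  | zero => exact IsOpenMap.id
  | succ j ih => rw [Function.iterate_succ]; exact ih.comp hφo

private lemma abs_prod_le {K : Type*} [TopologicalSpace K] [CompactSpace K]
    (φ : K → K) (w : C(K, ℂ)) (j : ℕ) (x : K) :
    ‖∏ i ∈ Finset.range j, w (φ^[i] x)‖ ≤ ‖w‖ ^ j := by
  rw [norm_prod]
  calc ∏ i ∈ Finset.range j, ‖w (φ^[i] x)‖
      ≤ ∏ _i ∈ Finset.range j, ‖w‖ := by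
        apply Finset.prod_le_prod
        · intro i _; exact norm_nonneg _
        · intro i _
          exact ContinuousMap.norm_coe_le_norm w (φ^[i] x)
    _ = ‖w‖ ^ j := by rw [Finset.prod_const, Finset.card_range]

private lemma key_estimate {K : Type*} [TopologicalSpace K] [CompactSpace K]
    (φ : K → K) (hφc : Continuous φ) (w g : C(K, ℂ)) (j : ℕ) (x : K) :
    ‖(∏ i ∈ Finset.range j, w (φ^[i] x)) * g (φ^[j] x) - g x‖ ≤
      (∑ i ∈ Finset.range j, ‖w‖ ^ i) * ‖w * g.comp ⟨φ, hφc⟩ - g‖ := by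
  induction j with
  | zero => simp
  | succ j ih =>
    set T := w * g.comp ⟨φ, hφc⟩ - g with hT
    have hstep : (∏ i ∈ Finset.range (j+1), w (φ^[i] x)) * g (φ^[j+1] x) - g x
        = (∏ i ∈ Finset.range j, w (φ^[i] x)) * T (φ^[j] x)
          + ((∏ i ∈ Finset.range j, w (φ^[i] x)) * g (φ^[j] x) - g x) := by
      rw [Finset.prod_range_succ, Function.iterate_succ_apply']
      simp only [hT, ContinuousMap.sub_apply, ContinuousMap.mul_apply,
        ContinuousMap.comp_apply, ContinuousMap.coe_mk]
      ring
    calc ‖(∏ i ∈ Finset.range (j+1), w (φ^[i] x)) * g (φ^[j+1] x) - g x‖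
        ≤ ‖(∏ i ∈ Finset.range j, w (φ^[i] x)) * T (φ^[j] x)‖
          + ‖(∏ i ∈ Finset.range j, w (φ^[i] x)) * g (φ^[j] x) - g x‖ := by
          rw [hstep]; exact norm_add_le _ _
      _ ≤ ‖w‖ ^ j * ‖T‖ + (∑ i ∈ Finset.range j, ‖w‖ ^ i) * ‖T‖ := by
          apply add_le_add _ ih
          rw [norm_mul]
          apply mul_le_mul (abs_prod_le φ w j x) _ (norm_nonneg _)
            (pow_nonneg (norm_nonneg _) j)
          exact ContinuousMap.norm_coe_le_norm T (φ^[j] x)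
      _ = (∑ i ∈ Finset.range (j+1), ‖w‖ ^ i) * ‖T‖ := by
          rw [Finset.sum_range_succ]; ring

theorem cocycle_domination_of_approx_eigenvectors
    {K : Type*} [TopologicalSpace K] [CompactSpace K] [TopologicalSpace.MetrizableSpace K]
    (φ : K → K) (hφc : Continuous φ) (hφo : IsOpenMap φ) (hφs : Surjective φ)
    (w : C(K, ℂ))
    (f : ℕ → C(K, ℂ)) (hf : ∀ n, ‖f n‖ = 1)
    (happrox : Tendsto (fun n => ‖w * (f n).comp ⟨φ, hφc⟩ - f n‖) atTop (nhds 0))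
    (kseq : ℕ → K) (hk1 : ∀ n, ‖(f n) (kseq n)‖ = 1)
    (k : K) (hklim : Tendsto kseq atTop (nhds k))
    (e : K) (m n : ℕ) (h : φ^[m] e = φ^[n] k) :
    ‖∏ i ∈ Finset.range m, w (φ^[i] e)‖ ≤
      ‖∏ i ∈ Finset.range n, w (φ^[i] k)‖ := by
  classical
  letI : MetricSpace K := TopologicalSpace.metrizableSpaceMetric K
  set ε : ℕ → ℝ := fun q => ‖w * (f q).comp ⟨φ, hφc⟩ - f q‖ with hε
  set Cm : ℝ := ∑ i ∈ Finset.range m, ‖w‖ ^ i with hCm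
  set Cn : ℝ := ∑ i ∈ Finset.range n, ‖w‖ ^ i with hCn
  -- sets of lifts
  set S : ℕ → Set K := fun q => {x | φ^[m] x = φ^[n] (kseq q)} with hS
  have hSne : ∀ q, (S q).Nonempty := fun q => (hφs.iterate m) (φ^[n] (kseq q))
  -- choose lifts close to e
  have hex : ∀ q : ℕ, ∃ y, y ∈ S q ∧ dist e y < Metric.infDist e (S q) + 1/(q+1 : ℝ) := by
    intro q
    have : Metric.infDist e (S q) < Metric.infDist e (S q) + 1/(q+1 : ℝ) := by
      have : (0:ℝ) < 1/(q+1 : ℝ) := by positivity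
      linarith
    exact (Metric.infDist_lt_iff (hSne q)).mp this
  choose eseq heS hedist using hex
  -- infDist e (S q) → 0 via openness
  have hinf0 : Tendsto (fun q => Metric.infDist e (S q)) atTop (nhds 0) := by
    rw [Metric.tendsto_atTop]
    intro δ hδ
    have hopen : IsOpen (φ^[m] '' Metric.ball e δ) :=
      isOpenMap_iterate hφo m _ Metric.isOpen_ball
    have hmem : φ^[m] e ∈ φ^[m] '' Metric.ball e δ :=
      ⟨e, Metric.mem_ball_self hδ, rfl⟩
    have htend : Tendsto (fun q => φ^[n] (kseq q)) atTop (nhds (φ^[m] e)) := by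
      rw [h]
      exact ((hφc.iterate n).tendsto k).comp hklim
    have hev : ∀ᶠ q in atTop, φ^[n] (kseq q) ∈ φ^[m] '' Metric.ball e δ :=
      htend (hopen.mem_nhds hmem)
    rcases hev.exists_forall_of_atTop with ⟨N, hN⟩
    refine ⟨N, fun q hq => ?_⟩
    rcases hN q hq with ⟨y, hyb, hye⟩
    have hyS : y ∈ S q := hye
    have h1 : Metric.infDist e (S q) ≤ dist e y :=
      Metric.infDist_le_dist_of_mem hyS
    have h2 : dist e y < δ := by rw [dist_comm]; exact hyb
    rw [Real.dist_eq, sub_zero, abs_of_nonneg Metric.infDist_nonneg]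
    linarith
  -- eseq → e
  have helim : Tendsto eseq atTop (nhds e) := by
    rw [tendsto_iff_dist_tendsto_zero]
    apply squeeze_zero (fun q => dist_nonneg)
      (g := fun q => Metric.infDist e (S q) + 1/(q+1 : ℝ))
    · intro q
      rw [dist_comm]
      exact le_of_lt (hedist q)
    · have h2 : Tendsto (fun q : ℕ => 1/(q+1 : ℝ)) atTop (nhds 0) :=
        tendsto_one_div_add_atTop_nhds_zero_nat
      simpa using hinf0.add h2
  -- pointwise bounds
  set a : ℕ → ℝ := fun q => ‖∏ i ∈ Finset.range m, w (φ^[i] (eseq q))‖ with ha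
  set b : ℕ → ℝ := fun q => ‖∏ i ∈ Finset.range n, w (φ^[i] (kseq q))‖ with hb
  set g : ℕ → ℝ := fun q => ‖(f q) (φ^[n] (kseq q))‖ with hg
  have hfb : ∀ q (x : K), ‖(f q) x‖ ≤ 1 := by
    intro q x
    have := ContinuousMap.norm_coe_le_norm (f q) x
    rwa [hf q] at this
  have hub : ∀ q, a q * g q ≤ 1 + Cm * ε q := by
    intro q
    have hkey := key_estimate φ hφc w (f q) m (eseq q)
    have htri : ‖(∏ i ∈ Finset.range m, w (φ^[i] (eseq q))) * (f q) (φ^[m] (eseq q))‖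
        ≤ ‖(f q) (eseq q)‖
          + ‖(∏ i ∈ Finset.range m, w (φ^[i] (eseq q))) * (f q) (φ^[m] (eseq q))
            - (f q) (eseq q)‖ := by
      calc _ = ‖((∏ i ∈ Finset.range m, w (φ^[i] (eseq q))) * (f q) (φ^[m] (eseq q))
            - (f q) (eseq q)) + (f q) (eseq q)‖ := by ring_nf
        _ ≤ _ := by rw [add_comm ‖_‖]; exact norm_add_le _ _
    have heq : φ^[m] (eseq q) = φ^[n] (kseq q) := heS q
    have : a q * g q = ‖(∏ i ∈ Finset.range m, w (φ^[i] (eseq q)))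
        * (f q) (φ^[m] (eseq q))‖ := by
      rw [norm_mul, heq]
    rw [this]
    calc _ ≤ ‖(f q) (eseq q)‖ + Cm * ε q := le_trans htri (by linarith [hkey])
      _ ≤ 1 + Cm * ε q := by linarith [hfb q (eseq q)]
  have hlb : ∀ q, 1 - Cn * ε q ≤ b q * g q := by
    intro q
    have hkey := key_estimate φ hφc w (f q) n (kseq q)
    have : (1:ℝ) = ‖(f q) (kseq q)‖ := (hk1 q).symm
    have htri : ‖(f q) (kseq q)‖
        ≤ ‖(∏ i ∈ Finset.range n, w (φ^[i] (kseq q))) * (f q) (φ^[n] (kseq q))‖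
          + ‖(∏ i ∈ Finset.range n, w (φ^[i] (kseq q))) * (f q) (φ^[n] (kseq q))
            - (f q) (kseq q)‖ := by
      calc ‖(f q) (kseq q)‖
          = ‖(∏ i ∈ Finset.range n, w (φ^[i] (kseq q))) * (f q) (φ^[n] (kseq q))
            - ((∏ i ∈ Finset.range n, w (φ^[i] (kseq q))) * (f q) (φ^[n] (kseq q))
              - (f q) (kseq q))‖ := by ring_nf
        _ ≤ _ := norm_sub_le _ _
    have hbg : b q * g q = ‖(∏ i ∈ Finset.range n, w (φ^[i] (kseq q)))
        * (f q) (φ^[n] (kseq q))‖ := (norm_mul _ _).symm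
    rw [hbg]
    linarith [hk1 q, hkey]
  -- combined inequality
  have hcomb : ∀ q, a q * (1 - Cn * ε q) ≤ (1 + Cm * ε q) * b q := by
    intro q
    have ha0 : 0 ≤ a q := norm_nonneg _
    have hb0 : 0 ≤ b q := norm_nonneg _
    calc a q * (1 - Cn * ε q) ≤ a q * (b q * g q) :=
          mul_le_mul_of_nonneg_left (hlb q) ha0
      _ = (a q * g q) * b q := by ring
      _ ≤ (1 + Cm * ε q) * b q := mul_le_mul_of_nonneg_right (hub q) hb0
  -- limits
  have hFcont : ∀ j : ℕ, Continuous (fun x : K =>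
      ‖∏ i ∈ Finset.range j, w (φ^[i] x)‖) := by
    intro j
    exact continuous_norm.comp
      (continuous_finset_prod _ fun i _ => w.continuous.comp (hφc.iterate i))
  have hatend : Tendsto a atTop
      (nhds (‖∏ i ∈ Finset.range m, w (φ^[i] e)‖)) :=
    ((hFcont m).tendsto e).comp helim
  have hbtend : Tendsto b atTop
      (nhds (‖∏ i ∈ Finset.range n, w (φ^[i] k)‖)) :=
    ((hFcont n).tendsto k).comp hklim
  have hεtend : Tendsto ε atTop (nhds 0) := happrox
  have hLHS : Tendsto (fun q => a q * (1 - Cn * ε q)) atTop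
      (nhds (‖∏ i ∈ Finset.range m, w (φ^[i] e)‖)) := by
    have := hatend.mul ((tendsto_const_nhds (x := (1:ℝ))).sub
      ((tendsto_const_nhds (x := Cn)).mul hεtend))
    simpa using this
  have hRHS : Tendsto (fun q => (1 + Cm * ε q) * b q) atTop
      (nhds (‖∏ i ∈ Finset.range n, w (φ^[i] k)‖)) := by
    have := (((tendsto_const_nhds (x := (1:ℝ))).add
      ((tendsto_const_nhds (x := Cm)).mul hεtend)).mul hbtend)
    simpa using this
  exact le_of_tendsto_of_tendsto' hLHS hRHS hcomb
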